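/- Let K be a field of characteristic not 2 with more than 3 elements, and for a,b,c ∈ K and d₁,d₂,d₃ ∈ {0,1} with (d₁,d₂,d₃) not all equal, set A = [[0,1,0],[0,0,0],[a,0,0]], B = [[0,0,0],[0,0,1],[b,0,0]], D = [[d₁,0,0],[0,d₂,0],[c,0,d₃]]. If every matrix in the span of A, B, D has at most two distinct eigenvalues in an algebraic closure of K and char K = 3, then a = b = c = 0. -/

import Mathlib

open Polynomial

private lemma cop_aux {F : Type*} [Field F] (q : F[X]) (r u : F) (hu : u ≠ 0)
    (hder : q.derivative = C u * (X - C r)) (hev : q.eval r ≠ 0) :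
    IsCoprime q q.derivative := by
  have h := Polynomial.modByMonic_add_div q (X - C r)
  rw [Polynomial.modByMonic_X_sub_C_eq_C_eval] at h
  have h1 : IsCoprime q (X - C r) := by
    refine ⟨C (q.eval r)⁻¹, -C (q.eval r)⁻¹ * (q /ₘ (X - C r)), ?_⟩
    have hc : C (q.eval r)⁻¹ * C (q.eval r) = 1 := by
      rw [← C_mul, inv_mul_cancel₀ hev, C_1]
    calc C (q.eval r)⁻¹ * q + -C (q.eval r)⁻¹ * (q /ₘ (X - C r)) * (X - C r)
        = C (q.eval r)⁻¹ * (C (q.eval r) + (X - C r) * (q /ₘ (X - C r)))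
          + -C (q.eval r)⁻¹ * (q /ₘ (X - C r)) * (X - C r) := by rw [h]
      _ = C (q.eval r)⁻¹ * C (q.eval r) := by ring
      _ = 1 := hc
  have h2 : IsCoprime q (C u) := ⟨0, C u⁻¹, by simp [← C_mul, inv_mul_cancel₀ hu]⟩
  rw [hder]
  exact h2.mul_right h1

private lemma roots_aux {F : Type*} [Field F] [DecidableEq F] [IsAlgClosed F] (q : F[X])
    (hdeg : q.natDegree = 3) (hcop : IsCoprime q q.derivative) :
    {x : F | q.IsRoot x}.ncard = 3 := by
  have hq0 : q ≠ 0 := fun h => by simp [h] at hdeg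
  have hsep : q.Separable := hcop
  have hnodup := Polynomial.nodup_roots hsep
  have hsplit : q.Splits := IsAlgClosed.splits q
  have hcard : q.roots.card = 3 := by
    rw [← hdeg, eq_comm]
    exact (Polynomial.splits_iff_card_roots.mp hsplit).symm
  have hset : {x : F | q.IsRoot x} = ↑q.roots.toFinset := by
    ext x; simp [Polynomial.mem_roots, hq0]
  rw [hset, Set.ncard_coe_finset, Multiset.toFinset_card_of_nodup hnodup, hcard]

private lemma three_poly_zero {F : Type*} [Field F] [CharP F 3] : (3 : F[X]) = 0 := by
  have : ((3:ℕ) : F[X]) = 0 := by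
    rw [← Polynomial.C_eq_natCast, CharP.cast_eq_zero F 3, C_0]
  simpa using this

private lemma keyA {F : Type*} [Field F] [DecidableEq F] [IsAlgClosed F] [CharP F 3]
    (s : F) (hs : s ≠ 0) :
    {x : F | ((X:F[X])^3 - X^2 - C s).IsRoot x}.ncard = 3 := by
  refine roots_aux _ (by compute_degree!) (cop_aux _ 0 1 one_ne_zero ?_ (by simpa using neg_ne_zero.mpr hs))
  have h3 := three_poly_zero (F := F)
  simp only [derivative_sub, derivative_C, derivative_X_pow]
  push_cast
  simp only [map_ofNat, map_one, map_zero, map_neg]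
  linear_combination (X^2 - (X:F[X])) * h3

private lemma keyB {F : Type*} [Field F] [DecidableEq F] [IsAlgClosed F] [CharP F 3]
    (s : F) (hs : s ≠ 0) :
    {x : F | ((X:F[X])^3 + X^2 + X - C s).IsRoot x}.ncard = 3 := by
  have h3F : (3 : F) = 0 := by exact_mod_cast CharP.cast_eq_zero F 3
  refine roots_aux _ (by compute_degree!) (cop_aux _ 1 (-1) (neg_ne_zero.mpr one_ne_zero) ?_ ?_)
  · have h3 := three_poly_zero (F := F)
    simp only [derivative_sub, derivative_add, derivative_C, derivative_X_pow, derivative_X,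
      map_one, map_neg]
    push_cast
    simp only [map_ofNat, map_one, map_zero, map_neg]
    linear_combination (X^2 + (X:F[X])) * h3
  · have : ((X:F[X])^3 + X^2 + X - C s).eval 1 = 3 - s := by simp; ring
    rw [this, h3F, zero_sub]
    exact neg_ne_zero.mpr hs

private lemma key {F : Type*} [Field F] [DecidableEq F] [IsAlgClosed F] [CharP F 3]
    (e₁ e₂ e₃ s : F) (h1 : e₁ = 0 ∨ e₁ = 1) (h2 : e₂ = 0 ∨ e₂ = 1) (h3 : e₃ = 0 ∨ e₃ = 1)
    (hne : ¬ (e₁ = e₂ ∧ e₂ = e₃)) (hs : s ≠ 0) :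
    {x : F | ((X - C e₁) * (X - C e₂) * (X - C e₃) - C s).IsRoot x}.ncard = 3 := by
  have h30 := three_poly_zero (F := F)
  rcases h1 with rfl | rfl <;> rcases h2 with rfl | rfl <;> rcases h3 with rfl | rfl
  · exact absurd ⟨rfl, rfl⟩ hne
  · have : (X - C (0:F)) * (X - C 0) * (X - C 1) - C s = X^3 - X^2 - C s := by
      simp only [C_0, C_1, sub_zero]; ring
    rw [this]; exact keyA s hs
  · have : (X - C (0:F)) * (X - C 1) * (X - C 0) - C s = X^3 - X^2 - C s := by
      simp only [C_0, C_1, sub_zero]; ring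
    rw [this]; exact keyA s hs
  · have : (X - C (0:F)) * (X - C 1) * (X - C 1) - C s = X^3 + X^2 + X - C s := by
      simp only [C_0, C_1, sub_zero]; linear_combination (-(X:F[X])^2) * h30
    rw [this]; exact keyB s hs
  · have : (X - C (1:F)) * (X - C 0) * (X - C 0) - C s = X^3 - X^2 - C s := by
      simp only [C_0, C_1, sub_zero]; ring
    rw [this]; exact keyA s hs
  · have : (X - C (1:F)) * (X - C 0) * (X - C 1) - C s = X^3 + X^2 + X - C s := by
      simp only [C_0, C_1, sub_zero]; linear_combination (-(X:F[X])^2) * h30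
    rw [this]; exact keyB s hs
  · have : (X - C (1:F)) * (X - C 1) * (X - C 0) - C s = X^3 + X^2 + X - C s := by
      simp only [C_0, C_1, sub_zero]; linear_combination (-(X:F[X])^2) * h30
    rw [this]; exact keyB s hs
  · exact absurd ⟨rfl, rfl⟩ hne

private lemma charpoly_aux {K : Type*} [Field K] (p q r x y z : K) :
    (Matrix.charpoly !![p, x, 0; 0, q, y; z, 0, r]) =
      (X - C p) * (X - C q) * (X - C r) - C (x*y*z) := by
  rw [Matrix.charpoly, Matrix.det_fin_three]
  simp [Matrix.charmatrix_apply, Matrix.diagonal]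
  ring

theorem stmt18 {K : Type*} [Field K] (h2 : (2 : K) ≠ 0)
    (hcard : (3 : Cardinal) < Cardinal.mk K) [CharP K 3]
    (a b c d₁ d₂ d₃ : K)
    (hd₁ : d₁ = 0 ∨ d₁ = 1) (hd₂ : d₂ = 0 ∨ d₂ = 1) (hd₃ : d₃ = 0 ∨ d₃ = 1)
    (hne : ¬ (d₁ = d₂ ∧ d₂ = d₃))
    (hspec : ∀ M ∈ Submodule.span K
        ({!![0, 1, 0; 0, 0, 0; a, 0, 0], !![0, 0, 0; 0, 0, 1; b, 0, 0],
          !![d₁, 0, 0; 0, d₂, 0; c, 0, d₃]} : Set (Matrix (Fin 3) (Fin 3) K)),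
      {x : AlgebraicClosure K |
        ((Matrix.charpoly M).map (algebraMap K (AlgebraicClosure K))).IsRoot x}.ncard ≤ 2) :
    a = 0 ∧ b = 0 ∧ c = 0 := by
  classical
  set F := AlgebraicClosure K
  have hinj : Function.Injective (algebraMap K F) := (algebraMap K F).injective
  haveI : CharP F 3 := charP_of_injective_algebraMap hinj 3
  have hmain : ∀ x y : K, x * y * (a*x + b*y + c) = 0 := by
    intro x y
    by_contra hs
    have hM : (!![d₁, x, 0; 0, d₂, y; a*x+b*y+c, 0, d₃] : Matrix (Fin 3) (Fin 3) K) ∈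
        Submodule.span K
        ({!![0, 1, 0; 0, 0, 0; a, 0, 0], !![0, 0, 0; 0, 0, 1; b, 0, 0],
          !![d₁, 0, 0; 0, d₂, 0; c, 0, d₃]} : Set (Matrix (Fin 3) (Fin 3) K)) := by
      have heq : (!![d₁, x, 0; 0, d₂, y; a*x+b*y+c, 0, d₃] : Matrix (Fin 3) (Fin 3) K)
          = x • !![0, 1, 0; 0, 0, 0; a, 0, 0] + (y • !![0, 0, 0; 0, 0, 1; b, 0, 0]
            + !![d₁, 0, 0; 0, d₂, 0; c, 0, d₃]) := by
        ext i j
        fin_cases i <;> fin_cases j <;>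
          simp [Matrix.add_apply, Matrix.smul_apply, Matrix.vecHead, Matrix.vecTail] <;> ring
      rw [heq]
      exact Submodule.add_mem _
        (Submodule.smul_mem _ _ (Submodule.subset_span (by simp)))
        (Submodule.add_mem _
          (Submodule.smul_mem _ _ (Submodule.subset_span (by simp)))
          (Submodule.subset_span (by simp)))
    have h := hspec _ hM
    rw [charpoly_aux] at h
    have hmap : ((X - C d₁) * (X - C d₂) * (X - C d₃)
          - C (x*y*(a*x+b*y+c))).map (algebraMap K F)
        = ((X - C (algebraMap K F d₁)) * (X - C (algebraMap K F d₂))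
            * (X - C (algebraMap K F d₃)) - C (algebraMap K F (x*y*(a*x+b*y+c)))) := by
      simp [Polynomial.map_sub, Polynomial.map_mul]
    rw [hmap] at h
    have hcount := key (algebraMap K F d₁) (algebraMap K F d₂) (algebraMap K F d₃)
      (algebraMap K F (x*y*(a*x+b*y+c)))
      (by rcases hd₁ with rfl | rfl <;> simp)
      (by rcases hd₂ with rfl | rfl <;> simp)
      (by rcases hd₃ with rfl | rfl <;> simp)
      (fun ⟨u, v⟩ => hne ⟨hinj u, hinj v⟩)
      (fun hz => hs (hinj (by simpa using hz)))
    rw [hcount] at h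
    norm_num at h
  have e1 : a + b + c = 0 := by linear_combination hmain 1 1
  have e2 : -a + b + c = 0 := by linear_combination -hmain (-1) 1
  have e3 : a - b + c = 0 := by linear_combination -hmain 1 (-1)
  have h2a : 2 * a = 0 := by linear_combination e1 - e2
  have h2b : 2 * b = 0 := by linear_combination e1 - e3
  have ha : a = 0 := by rcases mul_eq_zero.mp h2a with h | h; exacts [absurd h h2, h]
  have hb : b = 0 := by rcases mul_eq_zero.mp h2b with h | h; exacts [absurd h h2, h]
  exact ⟨ha, hb, by linear_combination e1 - ha - hb⟩
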